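/- The function φ(x) = x + c/(λ+δ) satisfies, for every x > 0, c·φ'(x) − (λ+δ)·φ(x) + λ·∫₀ˣ φ(x−y)·α·e^{−αy} dy = −δ·x + λ·(1 − e^{−αx})·(c/(λ+δ) − 1/α). In particular, if α·λ·c ≤ (λ+δ)², then this quantity is ≤ 0 for all x > 0, and hence φ solves the quasi-variational inequality: max{ c·φ'(x) − (λ+δ)·φ(x) + λ·∫₀ˣ φ(x−y)·α·e^{−αy} dy , 1 − φ'(x) } = 0 for every x > 0. -/

import Mathlib

lemma aux_integral (al k x : ℝ) (hal : al ≠ 0) :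
    ∫ y in (0:ℝ)..x, ((x - y) + k) * (al * Real.exp (-al * y))
      = (x + k - 1/al) - (k - 1/al) * Real.exp (-al * x) := by
  have h : ∀ y ∈ Set.uIcc (0:ℝ) x,
      HasDerivAt (fun y => -((x - y) + k - 1/al) * Real.exp (-al * y))
        (((x - y) + k) * (al * Real.exp (-al * y))) y := by
    intro y _
    have ha : HasDerivAt (fun y : ℝ => x - y) (-1) y := (hasDerivAt_id' (x := y)).const_sub x
    have hb : HasDerivAt (fun y : ℝ => -((x - y) + k - 1/al)) (-(-1)) y :=
      ((ha.add_const k).sub_const (1/al)).neg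
    have h2 : HasDerivAt (fun y : ℝ => Real.exp (-al * y))
        (Real.exp (-al * y) * (-al * 1)) y :=
      ((hasDerivAt_id' (x := y)).const_mul (-al)).exp
    have := hb.mul h2
    refine this.congr_deriv ?_
    have hinv : 1 / al * al = 1 := by field_simp
    linear_combination (-Real.exp (-al * y)) * hinv
  have hint : IntervalIntegrable
      (fun y => ((x - y) + k) * (al * Real.exp (-al * y))) MeasureTheory.volume 0 x := by
    apply Continuous.intervalIntegrable
    continuity
  rw [intervalIntegral.integral_eq_sub_of_hasDerivAt h hint]
  simp [Real.exp_zero]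
  ring

lemma aux_deriv (c' : ℝ) (x : ℝ) : deriv (fun z : ℝ => z + c') x = 1 := by
  simp

theorem stmt_17 (c lam del al : ℝ) (hc : 0 < c) (hlam : 0 < lam) (hdel : 0 < del)
    (hal : 0 < al) :
    (∀ x > (0:ℝ),
      c * deriv (fun z => z + c / (lam + del)) x - (lam + del) * (x + c / (lam + del))
          + lam * ∫ y in (0:ℝ)..x, ((x - y) + c / (lam + del)) * (al * Real.exp (-al * y))
        = -del * x + lam * (1 - Real.exp (-al * x)) * (c / (lam + del) - 1 / al)) ∧
    (al * lam * c ≤ (lam + del) ^ 2 →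
      (∀ x > (0:ℝ),
        -del * x + lam * (1 - Real.exp (-al * x)) * (c / (lam + del) - 1 / al) ≤ 0) ∧
      ∀ x > (0:ℝ),
        max (c * deriv (fun z => z + c / (lam + del)) x
              - (lam + del) * (x + c / (lam + del))
              + lam * ∫ y in (0:ℝ)..x,
                  ((x - y) + c / (lam + del)) * (al * Real.exp (-al * y)))
          (1 - deriv (fun z => z + c / (lam + del)) x) = 0) := by
  have hld : (0:ℝ) < lam + del := by linarith
  have heq : ∀ x > (0:ℝ),
      c * deriv (fun z => z + c / (lam + del)) x - (lam + del) * (x + c / (lam + del))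
          + lam * ∫ y in (0:ℝ)..x, ((x - y) + c / (lam + del)) * (al * Real.exp (-al * y))
        = -del * x + lam * (1 - Real.exp (-al * x)) * (c / (lam + del) - 1 / al) := by
    intro x hx
    rw [aux_deriv, aux_integral _ _ _ (ne_of_gt hal)]
    field_simp
    ring
  have hneg : al * lam * c ≤ (lam + del) ^ 2 →
      ∀ x > (0:ℝ),
        -del * x + lam * (1 - Real.exp (-al * x)) * (c / (lam + del) - 1 / al) ≤ 0 := by
    intro hcond x hx
    have hE : Real.exp (-al * x) < 1 := by
      apply Real.exp_lt_one_iff.mpr; nlinarith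
    have hE0 : 0 < Real.exp (-al * x) := Real.exp_pos _
    have h1E : 1 - Real.exp (-al * x) ≤ al * x := by
      nlinarith [Real.add_one_le_exp (-al * x)]
    rcases le_or_gt (c / (lam + del) - 1 / al) 0 with h | h
    · have : lam * (1 - Real.exp (-al * x)) * (c / (lam + del) - 1 / al) ≤ 0 :=
        mul_nonpos_of_nonneg_of_nonpos (by nlinarith) h
      nlinarith
    · have hk : lam * (c / (lam + del) - 1 / al) ≤ del / al := by
        rw [div_sub_div _ _ (ne_of_gt hld) (ne_of_gt hal), ← mul_div_assoc,
          div_le_div_iff₀ (by positivity) hal]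
        nlinarith [mul_le_mul_of_nonneg_left hcond hal.le]
      have hmain : lam * (1 - Real.exp (-al * x)) * (c / (lam + del) - 1 / al)
          ≤ (del / al) * (al * x) := by
        have h1 : lam * (1 - Real.exp (-al * x)) * (c / (lam + del) - 1 / al)
            = (lam * (c / (lam + del) - 1 / al)) * (1 - Real.exp (-al * x)) := by ring
        rw [h1]
        apply mul_le_mul hk h1E (by nlinarith) (by positivity)
      have hda : (del / al) * (al * x) = del * x := by field_simp
      rw [hda] at hmain
      linarith
  refine ⟨heq, fun hcond => ⟨hneg hcond, fun x hx => ?_⟩⟩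
  have h := hneg hcond x hx
  rw [heq x hx, aux_deriv, show (1:ℝ) - 1 = 0 by ring, max_eq_right h]
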